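/- arXiv:1007.3386 — 4 statements merged into one kernel-verified Lean document; each statement's English description precedes it below -/
import Mathlib

section
/- Suppose k satisfies k(x,s) ≤ k(x+λ, s+λ) for all λ ≥ 0 and all (x,s). If v is a subsolution of u(x) = ∫₀ˣ k(x,s) g(u(s)) ds, then for every c > 0, the shifted function v_c defined by v_c(x) = 0 for x ∈ [0,c] and v_c(x) = v(x−c) for x > c is also a subsolution. -/
open MeasureTheory Set Filter

set_option maxHeartbeats 1000000 in
theorem shifted_subsolution
    (k : ℝ → ℝ → ℝ) (g v : ℝ → ℝ) (c : ℝ)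
    (hk_nonneg : ∀ x s, 0 ≤ k x s)
    (hk_zero : ∀ x s, x < s → k x s = 0)
    (hk_trans : ∀ x s l : ℝ, 0 ≤ l → k x s ≤ k (x + l) (s + l))
    (hg_mono : Monotone g)
    (hg_nonneg : ∀ t, 0 ≤ g t)
    (hg_zero : g 0 = 0)
    (hv_meas : Measurable v)
    (hv_nonneg : ∀ x, 0 ≤ v x)
    (h_int : ∀ (f : ℝ → ℝ), Measurable f → ∀ x,
      IntervalIntegrable (fun s => k x s * g (f s)) volume 0 x)
    (hv_sub : ∀ x, 0 ≤ x → v x ≤ ∫ s in (0:ℝ)..x, k x s * g (v s))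
    (hc : 0 < c) :
    ∀ x, 0 ≤ x →
      (if x ≤ c then 0 else v (x - c)) ≤
        ∫ s in (0:ℝ)..x, k x s * g (if s ≤ c then 0 else v (s - c)) := by
  intro x hx
  set vc : ℝ → ℝ := fun s => if s ≤ c then 0 else v (s - c) with hvc_def
  have hvc_meas : Measurable vc :=
    Measurable.ite (measurableSet_le measurable_id measurable_const)
      measurable_const (hv_meas.comp (measurable_id.sub measurable_const))
  have h_nonneg : ∀ s, 0 ≤ k x s * g (vc s) :=
    fun s => mul_nonneg (hk_nonneg x s) (hg_nonneg _)
  by_cases hxc : x ≤ c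
  · simp only [hxc, if_true]
    exact intervalIntegral.integral_nonneg hx fun s _ => h_nonneg s
  · push_neg at hxc
    simp only [not_le.mpr hxc, if_false]
    have hcx : c ≤ x := hxc.le
    have hxc0 : (0:ℝ) ≤ x - c := by linarith
    -- key integrabilities
    have hI : IntervalIntegrable (fun s => k x s * g (vc s)) volume 0 x :=
      h_int vc hvc_meas x
    have hI1 : IntervalIntegrable (fun s => k x s * g (vc s)) volume 0 c :=
      hI.mono_set (by rw [uIcc_of_le hc.le, uIcc_of_le hx]; exact Icc_subset_Icc le_rfl hcx)
    have hI2 : IntervalIntegrable (fun s => k x s * g (vc s)) volume c x :=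
      hI.mono_set (by rw [uIcc_of_le hcx, uIcc_of_le hx]; exact Icc_subset_Icc hc.le le_rfl)
    have hI2' : IntervalIntegrable (fun s => k x s * g (v (s - c))) volume c x := by
      constructor
      · exact hI2.1.congr_fun
          (fun s hs => by simp [hvc_def, not_le.mpr hs.1]) measurableSet_Ioc
      · rw [Ioc_eq_empty (not_lt.mpr hcx)]
        exact integrableOn_empty
    have hI3 : IntervalIntegrable (fun t => k x (t + c) * g (v t)) volume 0 (x - c) := by
      have := hI2'.comp_add_right c
      simp only [sub_self, add_sub_cancel_right] at this
      exact this
    -- main chain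
    calc v (x - c) ≤ ∫ s in (0:ℝ)..(x - c), k (x - c) s * g (v s) := hv_sub _ hxc0
      _ ≤ ∫ s in (0:ℝ)..(x - c), k x (s + c) * g (v s) := by
          apply intervalIntegral.integral_mono_on hxc0 (h_int v hv_meas (x - c)) hI3
          intro s _
          have h := hk_trans (x - c) s c hc.le
          rw [sub_add_cancel] at h
          exact mul_le_mul_of_nonneg_right h (hg_nonneg _)
      _ = ∫ s in c..x, k x s * g (v (s - c)) := by
          have := intervalIntegral.integral_comp_add_right
            (fun s => k x s * g (v (s - c))) c (a := 0) (b := x - c)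
          simp only [add_sub_cancel_right, zero_add, sub_add_cancel] at this
          exact this
      _ = ∫ s in c..x, k x s * g (vc s) := by
          have hv0 : v 0 = 0 := le_antisymm (by simpa using hv_sub 0 le_rfl) (hv_nonneg 0)
          refine intervalIntegral.integral_congr fun s hs => ?_
          rw [uIcc_of_le hcx] at hs
          rcases eq_or_lt_of_le hs.1 with h | h
          · simp [hvc_def, ← h, hv0]
          · simp [hvc_def, not_le.mpr h]
      _ ≤ ∫ s in (0:ℝ)..x, k x s * g (vc s) := by
          rw [← intervalIntegral.integral_add_adjacent_intervals hI1 hI2]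
          have h0 : (∫ s in (0:ℝ)..c, k x s * g (vc s)) = 0 := by
            have he : EqOn (fun s => k x s * g (vc s)) (fun _ => (0:ℝ)) (uIcc 0 c) := by
              intro s hs
              rw [uIcc_of_le hc.le] at hs
              simp [hvc_def, hs.2, hg_zero]
            rw [intervalIntegral.integral_congr he, intervalIntegral.integral_zero]
          rw [h0, zero_add]
end

section
/- Assume (GC), K continuous, and k(x,s) ≤ k(x+λ,s+λ) for λ ≥ 0. Then every continuous subsolution v of u(x) = ∫₀ˣ k(x,s)g(u(s)) ds is bounded above by any continuous positive solution u of the same equation: v ≤ u on the common domain. -/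
open MeasureTheory Set Filter Topology

theorem subsolution_le_solution
    (k : ℝ → ℝ → ℝ) (g u v : ℝ → ℝ) (L : ℝ)
    (hk_nonneg : ∀ x s, 0 ≤ k x s)
    (hk_zero : ∀ x s, x < s → k x s = 0)
    (hk_bdd : ∀ r > (0:ℝ), ∃ C, ∀ x ∈ Set.Icc (-r) r, ∀ s ∈ Set.Icc (-r) r, k x s ≤ C)
    (hk_int : ∀ x r, IntervalIntegrable (fun s => k x s) volume 0 r)
    (hK_mono : StrictMonoOn (fun x => ∫ s in (0:ℝ)..x, k x s) (Set.Ici 0))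
    (hK_cont : Continuous (fun x => ∫ s in (0:ℝ)..x, k x s))
    (hk_trans : ∀ x s l : ℝ, 0 ≤ l → k x s ≤ k (x + l) (s + l))
    (hg_cont : Continuous g)
    (hg_mono : StrictMonoOn g (Set.Ici 0))
    (hg_zero : ∀ x ≤ (0:ℝ), g x = 0)
    (hL : 0 < L)
    (hv_cont : ContinuousOn v (Set.Icc 0 L))
    (hv_nonneg : ∀ x ∈ Set.Icc (0:ℝ) L, 0 ≤ v x)
    (hv_sub : ∀ x ∈ Set.Icc (0:ℝ) L, v x ≤ ∫ s in (0:ℝ)..x, k x s * g (v s))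
    (hu_cont : ContinuousOn u (Set.Icc 0 L))
    (hu_pos : ∀ x ∈ Set.Ioc (0:ℝ) L, 0 < u x)
    (hu_sol : ∀ x ∈ Set.Icc (0:ℝ) L, u x = ∫ s in (0:ℝ)..x, k x s * g (u s)) :
    ∀ x ∈ Set.Icc (0:ℝ) L, v x ≤ u x := by
  have hg0 : g 0 = 0 := hg_zero 0 le_rfl
  have hg_nonneg : ∀ t, 0 ≤ g t := by
    intro t
    rcases le_or_gt t 0 with h | h
    · rw [hg_zero t h]
    · rw [← hg0]
      exact (hg_mono (Set.mem_Ici.mpr le_rfl) (Set.mem_Ici.mpr h.le) h).le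
  have hg_mono' : ∀ a b : ℝ, 0 ≤ a → a ≤ b → g a ≤ g b := by
    intro a b ha hab
    rcases eq_or_lt_of_le hab with rfl | h
    · exact le_rfl
    · exact (hg_mono (Set.mem_Ici.mpr ha) (Set.mem_Ici.mpr (ha.trans hab)) h).le
  have hu0 : u 0 = 0 := by
    rw [hu_sol 0 ⟨le_rfl, hL.le⟩, intervalIntegral.integral_same]
  have hv0 : v 0 ≤ 0 := by
    have := hv_sub 0 ⟨le_rfl, hL.le⟩
    rwa [intervalIntegral.integral_same] at this
  have hint : ∀ (y a b : ℝ) (w : ℝ → ℝ), ContinuousOn w (Set.uIcc a b) →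
      IntervalIntegrable (fun s => k y s * w s) volume a b := by
    intro y a b w hw
    exact ((hk_int y a).symm.trans (hk_int y b)).mul_continuousOn hw
  have hgu_cont : ContinuousOn (fun s => g (u s)) (Set.Icc 0 L) :=
    hg_cont.comp_continuousOn hu_cont
  have hgv_cont : ContinuousOn (fun s => g (v s)) (Set.Icc 0 L) :=
    hg_cont.comp_continuousOn hv_cont
  -- the translate u (· + lam) is a supersolution
  have hsuper : ∀ lam x : ℝ, 0 < lam → 0 ≤ x → x + lam ≤ L →
      (∫ s in (0:ℝ)..x, k x s * g (u (s + lam))) ≤ u (x + lam) := by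
    intro lam x hlam hx0 hxl
    have hsub1 : Set.uIcc (0:ℝ) lam ⊆ Set.Icc 0 L := by
      rw [Set.uIcc_of_le hlam.le]; exact Set.Icc_subset_Icc le_rfl (by linarith)
    have hsub2 : Set.uIcc lam (x + lam) ⊆ Set.Icc 0 L := by
      rw [Set.uIcc_of_le (by linarith)]; exact Set.Icc_subset_Icc hlam.le hxl
    have i01 : IntervalIntegrable (fun s => k (x + lam) s * g (u s)) volume 0 lam :=
      hint _ _ _ _ (hgu_cont.mono hsub1)
    have i02 : IntervalIntegrable (fun s => k (x + lam) s * g (u s)) volume lam (x + lam) :=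
      hint _ _ _ _ (hgu_cont.mono hsub2)
    have hsplit := intervalIntegral.integral_add_adjacent_intervals i01 i02
    have hpos1 : 0 ≤ ∫ s in (0:ℝ)..lam, k (x + lam) s * g (u s) :=
      intervalIntegral.integral_nonneg hlam.le fun s _ =>
        mul_nonneg (hk_nonneg _ _) (hg_nonneg _)
    have hshift : (∫ s in (0:ℝ)..x, k (x + lam) (s + lam) * g (u (s + lam)))
        = ∫ s in lam..(x + lam), k (x + lam) s * g (u s) := by
      have := intervalIntegral.integral_comp_add_right (a := 0) (b := x)
        (fun s => k (x + lam) s * g (u s)) lam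
      simpa using this
    have i2' : IntervalIntegrable
        (fun s => k (x + lam) (s + lam) * g (u (s + lam))) volume 0 x := by
      have := i02.comp_add_right lam
      simpa using this
    have i1' : IntervalIntegrable (fun s => k x s * g (u (s + lam))) volume 0 x := by
      apply hint
      apply hg_cont.comp_continuousOn
      apply hu_cont.comp ((continuous_id.add continuous_const).continuousOn)
      intro s hs
      rw [Set.uIcc_of_le hx0] at hs
      exact ⟨by simpa using by linarith [hs.1], by simpa using by linarith [hs.2]⟩
    have hmono : (∫ s in (0:ℝ)..x, k x s * g (u (s + lam)))
        ≤ ∫ s in (0:ℝ)..x, k (x + lam) (s + lam) * g (u (s + lam)) := by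
      apply intervalIntegral.integral_mono_on hx0 i1' i2'
      intro s _
      exact mul_le_mul_of_nonneg_right (hk_trans x s lam hlam.le) (hg_nonneg _)
    have hsol := hu_sol (x + lam) ⟨by linarith, hxl⟩
    calc (∫ s in (0:ℝ)..x, k x s * g (u (s + lam)))
        ≤ ∫ s in lam..(x + lam), k (x + lam) s * g (u s) := by
          rw [← hshift]; exact hmono
      _ ≤ u (x + lam) := by rw [hsol, ← hsplit]; linarith
  -- key comparison with the translate
  have key : ∀ lam : ℝ, 0 < lam → lam ≤ L → ∀ x : ℝ, 0 ≤ x → x ≤ L - lam →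
      v x < u (x + lam) := by
    intro lam hlam hlamL
    by_contra hcon
    push_neg at hcon
    obtain ⟨x1, hx10, hx1L, hx1⟩ := hcon
    set S : Set ℝ :=
      Set.Icc 0 (L - lam) ∩ (fun x => v x - u (x + lam)) ⁻¹' Set.Ici 0 with hS
    have hmem : ∀ x, x ∈ S ↔ (x ∈ Set.Icc 0 (L - lam) ∧ u (x + lam) ≤ v x) := by
      intro x; simp [hS, sub_nonneg]
    have hulcont : ContinuousOn (fun x => u (x + lam)) (Set.Icc 0 (L - lam)) := by
      apply hu_cont.comp ((continuous_id.add continuous_const).continuousOn)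
      intro s hs
      exact ⟨by simpa using by linarith [hs.1, hlam.le], by simpa using by linarith [hs.2]⟩
    have hScl : IsClosed S :=
      ContinuousOn.preimage_isClosed_of_isClosed
        ((hv_cont.mono (Set.Icc_subset_Icc le_rfl (by linarith))).sub hulcont)
        isClosed_Icc isClosed_Ici
    have hSne : S.Nonempty := ⟨x1, (hmem x1).mpr ⟨⟨hx10, hx1L⟩, hx1⟩⟩
    have hSbdd : BddBelow S := ⟨0, fun x hx => (((hmem x).mp hx).1).1⟩
    set x₀ := sInf S with hx₀def
    have hx₀S := hScl.csInf_mem hSne hSbdd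
    obtain ⟨⟨hx₀0, hx₀L⟩, hx₀v⟩ := (hmem x₀).mp hx₀S
    have hlt : ∀ s, 0 ≤ s → s < x₀ → v s < u (s + lam) := by
      intro s hs0 hsx
      by_contra h
      push_neg at h
      have hsS : s ∈ S := (hmem s).mpr ⟨⟨hs0, by linarith⟩, h⟩
      exact absurd (csInf_le hSbdd hsS) (not_le.mpr hsx)
    have hx₀pos : 0 < x₀ := by
      rcases eq_or_lt_of_le hx₀0 with h | h
      · exfalso
        have h1 : 0 < u (0 + lam) := by
          rw [zero_add]; exact hu_pos lam ⟨hlam, hlamL⟩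
        rw [← h] at hx₀v
        linarith
      · exact h
    have hx₀L' : x₀ ≤ L := by linarith
    have hsubI : Set.uIcc 0 x₀ ⊆ Set.Icc 0 L := by
      rw [Set.uIcc_of_le hx₀0]; exact Set.Icc_subset_Icc le_rfl hx₀L'
    have hulcont' : ContinuousOn (fun s => g (u (s + lam))) (Set.uIcc 0 x₀) := by
      apply hg_cont.comp_continuousOn
      apply hu_cont.comp ((continuous_id.add continuous_const).continuousOn)
      intro s hs
      rw [Set.uIcc_of_le hx₀0] at hs
      exact ⟨by simpa using by linarith [hs.1, hlam.le], by simpa using by linarith [hs.2]⟩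
    have intB : IntervalIntegrable (fun s => k x₀ s * g (u (s + lam))) volume 0 x₀ :=
      hint _ _ _ _ hulcont'
    have intA : IntervalIntegrable (fun s => k x₀ s * g (v s)) volume 0 x₀ :=
      hint _ _ _ _ (hgv_cont.mono hsubI)
    have hA : v x₀ ≤ ∫ s in (0:ℝ)..x₀, k x₀ s * g (v s) := hv_sub x₀ ⟨hx₀0, hx₀L'⟩
    have hne0 : ∀ᵐ s : ℝ, s ≠ x₀ := by
      have hsing : volume ({x₀} : Set ℝ) = 0 := measure_singleton x₀
      rw [MeasureTheory.ae_iff]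
      convert hsing using 2
      ext s; simp
    have haeIcc : ∀ᵐ s ∂(volume.restrict (Set.Icc 0 x₀)),
        k x₀ s * g (v s) ≤ k x₀ s * g (u (s + lam)) := by
      filter_upwards [MeasureTheory.ae_restrict_mem measurableSet_Icc,
        MeasureTheory.ae_restrict_of_ae hne0] with s hs hsne
      have hs' : s < x₀ := lt_of_le_of_ne hs.2 hsne
      have hvu := hlt s hs.1 hs'
      exact mul_le_mul_of_nonneg_left
        (hg_mono' _ _ (hv_nonneg s ⟨hs.1, by linarith⟩) hvu.le) (hk_nonneg _ _)
    have hAB := intervalIntegral.integral_mono_ae_restrict hx₀0 intA intB haeIcc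
    have hBu := hsuper lam x₀ hlam hx₀0 (by linarith)
    have hEq : (∫ s in (0:ℝ)..x₀, k x₀ s * g (v s))
        = ∫ s in (0:ℝ)..x₀, k x₀ s * g (u (s + lam)) := le_antisymm hAB (by linarith)
    have intD : IntervalIntegrable
        (fun s => k x₀ s * (g (u (s + lam)) - g (v s))) volume 0 x₀ := by
      have := intB.sub intA
      simpa [mul_sub] using this
    have hzero : (∫ s in (0:ℝ)..x₀, k x₀ s * (g (u (s + lam)) - g (v s))) = 0 := by
      have h1 : (∫ s in (0:ℝ)..x₀,
          (k x₀ s * g (u (s + lam)) - k x₀ s * g (v s)))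
          = (∫ s in (0:ℝ)..x₀, k x₀ s * g (u (s + lam)))
            - ∫ s in (0:ℝ)..x₀, k x₀ s * g (v s) :=
        intervalIntegral.integral_sub intB intA
      simp only [mul_sub]
      rw [h1, hEq, sub_self]
    have haeIoc : 0 ≤ᵐ[volume.restrict (Set.Ioc 0 x₀)]
        fun s => k x₀ s * (g (u (s + lam)) - g (v s)) := by
      filter_upwards [MeasureTheory.ae_restrict_mem measurableSet_Ioc,
        MeasureTheory.ae_restrict_of_ae hne0] with s hs hsne
      have hs' : s < x₀ := lt_of_le_of_ne hs.2 hsne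
      have hvu := hlt s hs.1.le hs'
      have hgg := hg_mono' _ _ (hv_nonneg s ⟨hs.1.le, by linarith⟩) hvu.le
      exact mul_nonneg (hk_nonneg _ _) (by linarith)
    have hfzero :=
      (intervalIntegral.integral_eq_zero_iff_of_le_of_nonneg_ae hx₀0 haeIoc intD).mp hzero
    have hkzero : (fun s => k x₀ s) =ᵐ[volume.restrict (Set.Ioc 0 x₀)] 0 := by
      filter_upwards [hfzero, MeasureTheory.ae_restrict_mem measurableSet_Ioc,
        MeasureTheory.ae_restrict_of_ae hne0] with s hf hs hsne
      have hs' : s < x₀ := lt_of_le_of_ne hs.2 hsne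
      have hvu := hlt s hs.1.le hs'
      have hvnn := hv_nonneg s ⟨hs.1.le, by linarith⟩
      have hgpos : 0 < g (u (s + lam)) - g (v s) := by
        have := hg_mono (Set.mem_Ici.mpr hvnn)
          (Set.mem_Ici.mpr (le_of_lt (lt_of_le_of_lt hvnn hvu))) hvu
        linarith
      simp only [Pi.zero_apply] at hf ⊢
      by_contra hk
      have hkpos : 0 < k x₀ s := lt_of_le_of_ne (hk_nonneg _ _) (Ne.symm hk)
      exact absurd hf (ne_of_gt (mul_pos hkpos hgpos))
    have hK0 : (∫ s in (0:ℝ)..x₀, k x₀ s) = 0 := by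
      rw [intervalIntegral.integral_of_le hx₀0]
      exact MeasureTheory.integral_eq_zero_of_ae hkzero
    have hKpos : 0 < ∫ s in (0:ℝ)..x₀, k x₀ s := by
      have h0 := hK_mono (Set.mem_Ici.mpr le_rfl) (Set.mem_Ici.mpr hx₀0) hx₀pos
      simpa [intervalIntegral.integral_same] using h0
    linarith
  have claim2 : ∀ x : ℝ, 0 ≤ x → x < L → v x ≤ u x := by
    intro x hx0 hxL
    rcases eq_or_lt_of_le hx0 with h | hxpos
    · rw [← h, hu0]; exact hv0
    · have hev : ∀ᶠ lam in 𝓝[>] (0:ℝ), v x ≤ u (x + lam) := by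
        filter_upwards [Ioo_mem_nhdsGT_of_mem
          (show (0:ℝ) ∈ Set.Ico (0:ℝ) (L - x) from ⟨le_rfl, by linarith⟩)] with lam hlam
        exact (key lam hlam.1 (by linarith [hlam.2]) x hx0 (by linarith [hlam.2])).le
      have htend : Tendsto (fun lam => u (x + lam)) (𝓝[>] (0:ℝ)) (𝓝 (u x)) := by
        have h1 : Tendsto (fun lam : ℝ => x + lam) (𝓝[>] (0:ℝ)) (𝓝[Set.Icc 0 L] x) := by
          apply tendsto_nhdsWithin_of_tendsto_nhds_of_eventually_within
          · have h2 : Tendsto (fun lam : ℝ => x + lam) (𝓝 (0:ℝ)) (𝓝 (x + 0)) :=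
              (continuous_const.add continuous_id).tendsto 0
            rw [add_zero] at h2
            exact h2.mono_left nhdsWithin_le_nhds
          · filter_upwards [Ioo_mem_nhdsGT_of_mem
              (show (0:ℝ) ∈ Set.Ico (0:ℝ) (L - x) from ⟨le_rfl, by linarith⟩)] with lam hlam
            exact ⟨by linarith [hlam.1], by linarith [hlam.2]⟩
        exact ((hu_cont x ⟨hx0, hxL.le⟩).tendsto).comp h1
      exact ge_of_tendsto htend hev
  intro x hx
  rcases lt_or_eq_of_le hx.2 with hxL | hxL
  · exact claim2 x hx.1 hxL
  · subst hxL
    haveI hneBot : (𝓝[Set.Ioo (0:ℝ) x] x).NeBot := by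
      rw [← mem_closure_iff_nhdsWithin_neBot, closure_Ioo (by linarith : (0:ℝ) ≠ x)]
      exact ⟨by linarith, le_rfl⟩
    have htv : Tendsto v (𝓝[Set.Ioo (0:ℝ) x] x) (𝓝 (v x)) :=
      ((hv_cont x hx).tendsto).mono_left (nhdsWithin_mono _ Set.Ioo_subset_Icc_self)
    have htu : Tendsto u (𝓝[Set.Ioo (0:ℝ) x] x) (𝓝 (u x)) :=
      ((hu_cont x hx).tendsto).mono_left (nhdsWithin_mono _ Set.Ioo_subset_Icc_self)
    have hev : v ≤ᶠ[𝓝[Set.Ioo (0:ℝ) x] x] u := by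
      filter_upwards [self_mem_nhdsWithin] with y hy
      exact claim2 y hy.1.le hy.2
    exact le_of_tendsto_of_tendsto htv htu hev
end

section
/- Assume (GC), K continuous, and k(x,s) ≤ k(x+λ,s+λ) for λ ≥ 0. Then the equation u(x) = ∫₀ˣ k(x,s) g(u(s)) ds has at most one positive continuous solution: if u₁ and u₂ are both positive solutions on a common interval, then u₁ = u₂. -/
open MeasureTheory Set Filter Topology

theorem uniq_one_sided
    (k : ℝ → ℝ → ℝ) (g u₁ u₂ : ℝ → ℝ) (L : ℝ)
    (hk_nonneg : ∀ x s, 0 ≤ k x s)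
    (hk_int : ∀ x r, IntervalIntegrable (fun s => k x s) volume 0 r)
    (hK_mono : StrictMonoOn (fun x => ∫ s in (0:ℝ)..x, k x s) (Set.Ici 0))
    (hk_trans : ∀ x s l : ℝ, 0 ≤ l → k x s ≤ k (x + l) (s + l))
    (hg_cont : Continuous g)
    (hg_mono : StrictMonoOn g (Set.Ici 0))
    (hg_zero : ∀ x ≤ (0:ℝ), g x = 0)
    (hL : 0 < L)
    (hu₁_cont : ContinuousOn u₁ (Set.Icc 0 L))
    (hu₁_pos : ∀ x ∈ Set.Ioc (0:ℝ) L, 0 < u₁ x)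
    (hu₁_sol : ∀ x ∈ Set.Icc (0:ℝ) L, u₁ x = ∫ s in (0:ℝ)..x, k x s * g (u₁ s))
    (hu₂_cont : ContinuousOn u₂ (Set.Icc 0 L))
    (hu₂_sol : ∀ x ∈ Set.Icc (0:ℝ) L, u₂ x = ∫ s in (0:ℝ)..x, k x s * g (u₂ s)) :
    ∀ x ∈ Set.Icc (0:ℝ) L, u₂ x ≤ u₁ x := by
  have hg0 : g 0 = 0 := hg_zero 0 le_rfl
  have hg_nonneg : ∀ t, 0 ≤ g t := by
    intro t
    rcases le_or_gt t 0 with h | h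
    · rw [hg_zero t h]
    · have := hg_mono (Set.self_mem_Ici) (Set.mem_Ici.mpr h.le) h
      rw [hg0] at this; exact this.le
  have hg_pos : ∀ t, 0 < t → 0 < g t := by
    intro t ht
    have := hg_mono (Set.self_mem_Ici) (Set.mem_Ici.mpr ht.le) ht
    rwa [hg0] at this
  have hg_le : ∀ a b : ℝ, a ≤ b → 0 ≤ b → g a ≤ g b := by
    intro a b hab hb
    rcases le_or_gt a 0 with h | h
    · rw [hg_zero a h]; exact hg_nonneg b
    · exact (hg_mono.monotoneOn (Set.mem_Ici.mpr h.le) (Set.mem_Ici.mpr hb) hab)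
  have hu₂0 : u₂ 0 = 0 := by
    have := hu₂_sol 0 ⟨le_rfl, hL.le⟩
    simpa using this
  have hgu₁ : ContinuousOn (fun t => g (u₁ t)) (Set.Icc 0 L) :=
    hg_cont.comp_continuousOn hu₁_cont
  -- Step A : shifted comparison
  have stepA : ∀ δ : ℝ, 0 < δ → δ ≤ L → ∀ x ∈ Set.Icc (0:ℝ) (L - δ), u₂ x ≤ u₁ (x + δ) := by
    intro δ hδ hδL
    have hδ0 : (0:ℝ) ≤ δ := hδ.le
    -- continuity of s ↦ g (u₁ (s + δ)) on [0, L - δ]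
    have hshift_cont : ContinuousOn (fun s => g (u₁ (s + δ))) (Set.Icc 0 (L - δ)) := by
      apply hgu₁.comp (Continuous.continuousOn (by continuity))
      intro s hs
      exact ⟨show (0:ℝ) ≤ s + δ by linarith [hs.1], show s + δ ≤ L by linarith [hs.2]⟩
    -- strict supersolution property of v(x) = u₁ (x + δ)
    have hsuper : ∀ x : ℝ, 0 < x → x + δ ≤ L →
        (∫ s in (0:ℝ)..x, k x s * g (u₁ (s + δ))) < u₁ (x + δ) := by
      intro x hx hxδ
      have hx0 : (0:ℝ) ≤ x := hx.le
      have hky : IntervalIntegrable (k (x+δ)) volume 0 (x+δ) := hk_int _ _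
      have hky1 : IntervalIntegrable (k (x+δ)) volume 0 δ := by
        apply hky.mono_set
        rw [uIcc_of_le hδ0, uIcc_of_le (by linarith : (0:ℝ) ≤ x + δ)]
        exact Set.Icc_subset_Icc le_rfl (by linarith)
      have hky2 : IntervalIntegrable (k (x+δ)) volume δ (x+δ) := by
        apply hky.mono_set
        rw [uIcc_of_le (by linarith : δ ≤ x + δ), uIcc_of_le (by linarith : (0:ℝ) ≤ x + δ)]
        exact Set.Icc_subset_Icc hδ0 le_rfl
      have hsubδ : Set.uIcc (0:ℝ) δ ⊆ Set.Icc 0 L := by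
        rw [uIcc_of_le hδ0]; exact Set.Icc_subset_Icc le_rfl (by linarith)
      have hsubδy : Set.uIcc δ (x+δ) ⊆ Set.Icc 0 L := by
        rw [uIcc_of_le (by linarith : δ ≤ x + δ)]
        exact Set.Icc_subset_Icc hδ0 hxδ
      have int1 : IntervalIntegrable (fun t => k (x+δ) t * g (u₁ t)) volume 0 δ :=
        hky1.mul_continuousOn (hgu₁.mono hsubδ)
      have int2 : IntervalIntegrable (fun t => k (x+δ) t * g (u₁ t)) volume δ (x+δ) :=
        hky2.mul_continuousOn (hgu₁.mono hsubδy)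
      have hsplit : u₁ (x+δ) = (∫ t in (0:ℝ)..δ, k (x+δ) t * g (u₁ t))
          + ∫ t in δ..(x+δ), k (x+δ) t * g (u₁ t) := by
        rw [hu₁_sol (x+δ) ⟨by linarith, hxδ⟩,
          intervalIntegral.integral_add_adjacent_intervals int1 int2]
      have hshift : (∫ t in δ..(x+δ), k (x+δ) t * g (u₁ t))
          = ∫ s in (0:ℝ)..x, k (x+δ) (s+δ) * g (u₁ (s+δ)) := by
        rw [intervalIntegral.integral_comp_add_right (fun t => k (x+δ) t * g (u₁ t)) δ]
        norm_num
      have hkshift : IntervalIntegrable (fun s => k (x+δ) (s+δ)) volume 0 x := by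
        have := hky2.comp_add_right δ
        simpa using this
      have hcont_x : ContinuousOn (fun s => g (u₁ (s + δ))) (Set.uIcc 0 x) := by
        apply hshift_cont.mono
        rw [uIcc_of_le hx0]
        exact Set.Icc_subset_Icc le_rfl (by linarith)
      have intRS : IntervalIntegrable (fun s => k (x+δ) (s+δ) * g (u₁ (s+δ))) volume 0 x :=
        hkshift.mul_continuousOn hcont_x
      have intLS : IntervalIntegrable (fun s => k x s * g (u₁ (s+δ))) volume 0 x :=
        (hk_int x x).mul_continuousOn hcont_x
      have hmono : (∫ s in (0:ℝ)..x, k x s * g (u₁ (s+δ)))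
          ≤ ∫ s in (0:ℝ)..x, k (x+δ) (s+δ) * g (u₁ (s+δ)) :=
        intervalIntegral.integral_mono_on hx0 intLS intRS
          (fun s _ => mul_le_mul_of_nonneg_right (hk_trans x s δ hδ0) (hg_nonneg _))
      have h1nonneg : 0 ≤ ∫ t in (0:ℝ)..δ, k (x+δ) t * g (u₁ t) :=
        intervalIntegral.integral_nonneg hδ0
          (fun t _ => mul_nonneg (hk_nonneg _ _) (hg_nonneg _))
      rcases lt_or_ge (∫ s in (0:ℝ)..x, k x s * g (u₁ (s+δ))) (u₁ (x+δ)) with h | h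
      · exact h
      exfalso
      have e1 : (∫ t in (0:ℝ)..δ, k (x+δ) t * g (u₁ t)) = 0 := by
        rw [hshift] at hsplit; linarith
      have e2 : (∫ s in (0:ℝ)..x, k x s * g (u₁ (s+δ)))
          = ∫ s in (0:ℝ)..x, k (x+δ) (s+δ) * g (u₁ (s+δ)) := by
        rw [hshift] at hsplit
        exact le_antisymm hmono (by linarith)
      -- from e1 : k (x+δ) = 0 a.e. on Ioc 0 δ
      have hI1 : (∫ t in (0:ℝ)..δ, k (x+δ) t) = 0 := by
        have hint : Integrable (fun t => k (x+δ) t * g (u₁ t)) (volume.restrict (Set.Ioc 0 δ)) := by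
          have := (intervalIntegrable_iff.mp int1)
          rwa [uIoc_of_le hδ0] at this
        have hnn : 0 ≤ᵐ[volume.restrict (Set.Ioc 0 δ)] (fun t => k (x+δ) t * g (u₁ t)) :=
          Filter.Eventually.of_forall (fun t => mul_nonneg (hk_nonneg _ _) (hg_nonneg _))
        have hz : (fun t => k (x+δ) t * g (u₁ t)) =ᵐ[volume.restrict (Set.Ioc 0 δ)] 0 :=by
          rw [← MeasureTheory.integral_eq_zero_iff_of_nonneg_ae hnn hint]
          rw [← intervalIntegral.integral_of_le hδ0]
          exact e1
        have hk0 : (fun t => k (x+δ) t) =ᵐ[volume.restrict (Set.Ioc 0 δ)] 0 := by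
          filter_upwards [hz, ae_restrict_mem measurableSet_Ioc] with t h ht
          have hgp : 0 < g (u₁ t) := hg_pos _ (hu₁_pos t ⟨ht.1, le_trans ht.2 hδL⟩)
          have := mul_eq_zero.mp h
          rcases this with h' | h'
          · exact h'
          · exact absurd h' hgp.ne'
        rw [intervalIntegral.integral_of_le hδ0]
        calc (∫ t in Set.Ioc 0 δ, k (x+δ) t) = ∫ t in Set.Ioc (0:ℝ) δ, (0:ℝ) :=
              MeasureTheory.integral_congr_ae hk0
          _ = 0 := by simp
      -- from e2 : k (x+δ) (s+δ) = k x s a.e. on Ioc 0 x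
      have hI2 : (∫ s in (0:ℝ)..x, k (x+δ) (s+δ)) = ∫ s in (0:ℝ)..x, k x s := by
        have hdiff : (∫ s in (0:ℝ)..x,
            (k (x+δ) (s+δ) * g (u₁ (s+δ)) - k x s * g (u₁ (s+δ)))) = 0 := by
          rw [intervalIntegral.integral_sub intRS intLS, e2, sub_self]
        have hint : Integrable (fun s => k (x+δ) (s+δ) * g (u₁ (s+δ)) - k x s * g (u₁ (s+δ)))
            (volume.restrict (Set.Ioc 0 x)) := by
          have := intervalIntegrable_iff.mp (intRS.sub intLS)
          rwa [uIoc_of_le hx0] at this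
        have hnn : 0 ≤ᵐ[volume.restrict (Set.Ioc 0 x)]
            (fun s => k (x+δ) (s+δ) * g (u₁ (s+δ)) - k x s * g (u₁ (s+δ))) :=
          Filter.Eventually.of_forall (fun s => sub_nonneg.mpr
            (mul_le_mul_of_nonneg_right (hk_trans x s δ hδ0) (hg_nonneg _)))
        have hz : (fun s => k (x+δ) (s+δ) * g (u₁ (s+δ)) - k x s * g (u₁ (s+δ)))
            =ᵐ[volume.restrict (Set.Ioc 0 x)] 0 := by
          rw [← MeasureTheory.integral_eq_zero_iff_of_nonneg_ae hnn hint]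
          rw [← intervalIntegral.integral_of_le hx0]
          exact hdiff
        have hk0 : (fun s => k (x+δ) (s+δ)) =ᵐ[volume.restrict (Set.Ioc 0 x)] (fun s => k x s) := by
          filter_upwards [hz, ae_restrict_mem measurableSet_Ioc] with s h hs
          have hgp : 0 < g (u₁ (s+δ)) :=
            hg_pos _ (hu₁_pos (s+δ) ⟨by linarith [hs.1], by linarith [hs.2]⟩)
          have h' : (k (x+δ) (s+δ) - k x s) * g (u₁ (s+δ)) = 0 := by
            rw [sub_mul]; exact h
          rcases mul_eq_zero.mp h' with h'' | h''
          · linarith [sub_eq_zero.mp h'']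
          · exact absurd h'' hgp.ne'
        rw [intervalIntegral.integral_of_le hx0, intervalIntegral.integral_of_le hx0]
        exact MeasureTheory.integral_congr_ae hk0
      -- conclude K (x+δ) = K x, contradicting strict monotonicity
      have hKsplit : (∫ t in (0:ℝ)..(x+δ), k (x+δ) t)
          = (∫ t in (0:ℝ)..δ, k (x+δ) t) + ∫ t in δ..(x+δ), k (x+δ) t :=
        (intervalIntegral.integral_add_adjacent_intervals hky1 hky2).symm
      have hshiftK : (∫ t in δ..(x+δ), k (x+δ) t) = ∫ s in (0:ℝ)..x, k (x+δ) (s+δ) := by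
        rw [intervalIntegral.integral_comp_add_right (fun t => k (x+δ) t) δ]
        norm_num
      have hKeq : (∫ t in (0:ℝ)..(x+δ), k (x+δ) t) = ∫ s in (0:ℝ)..x, k x s := by
        rw [hKsplit, hI1, hshiftK, hI2, zero_add]
      have := hK_mono (Set.mem_Ici.mpr hx0) (Set.mem_Ici.mpr (by linarith))
        (by linarith : x < x + δ)
      simp only [] at this
      rw [hKeq] at this
      exact lt_irrefl _ this
    -- first-crossing argument
    intro z hz
    by_contra hcon
    push_neg at hcon
    set S : Set ℝ := {x | x ∈ Set.Icc (0:ℝ) (L - δ) ∧ u₁ (x + δ) < u₂ x} with hS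
    have hSne : S.Nonempty := ⟨z, hz, hcon⟩
    have hSbdd : BddBelow S := ⟨0, fun y hy => hy.1.1⟩
    set x₀ := sInf S with hx₀def
    have hglb : IsGLB S x₀ := Real.isGLB_sInf hSne hSbdd
    have hvc : ContinuousOn (fun x => u₂ x - u₁ (x + δ)) (Set.Icc 0 (L - δ)) := by
      apply ContinuousOn.sub
      · exact hu₂_cont.mono (Set.Icc_subset_Icc le_rfl (by linarith))
      · apply hu₁_cont.comp (Continuous.continuousOn (by continuity))
        intro s hs
        exact ⟨show (0:ℝ) ≤ s + δ by linarith [hs.1], show s + δ ≤ L by linarith [hs.2]⟩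
    have hclosed : IsClosed (Set.Icc (0:ℝ) (L-δ) ∩ (fun x => u₂ x - u₁ (x+δ)) ⁻¹' (Set.Ici 0)) :=
      hvc.preimage_isClosed_of_isClosed isClosed_Icc isClosed_Ici
    have hsub : S ⊆ Set.Icc (0:ℝ) (L-δ) ∩ (fun x => u₂ x - u₁ (x+δ)) ⁻¹' (Set.Ici 0) := by
      intro y hy
      exact ⟨hy.1, by simp [Set.mem_preimage]; linarith [hy.2]⟩
    have hx₀mem : x₀ ∈ Set.Icc (0:ℝ) (L-δ) ∩ (fun x => u₂ x - u₁ (x+δ)) ⁻¹' (Set.Ici 0) := by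
      have h1 : x₀ ∈ closure S := hglb.mem_closure hSne
      have h2 : closure S ⊆ Set.Icc (0:ℝ) (L-δ) ∩ (fun x => u₂ x - u₁ (x+δ)) ⁻¹' (Set.Ici 0) :=
        hclosed.closure_subset_iff.mpr hsub
      exact h2 h1
    have hx₀Icc : x₀ ∈ Set.Icc (0:ℝ) (L - δ) := hx₀mem.1
    have hx₀ge : u₁ (x₀ + δ) ≤ u₂ x₀ := by
      have := hx₀mem.2
      simp [Set.mem_preimage] at this
      linarith
    have hx₀pos : 0 < x₀ := by
      rcases hx₀Icc.1.eq_or_lt with h | h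
      · exfalso
        have : u₁ (0 + δ) ≤ u₂ 0 := h ▸ hx₀ge
        rw [zero_add, hu₂0] at this
        exact absurd this (not_le.mpr (hu₁_pos δ ⟨hδ, hδL⟩))
      · exact h
    have hbelow : ∀ s ∈ Set.Ico (0:ℝ) x₀, u₂ s ≤ u₁ (s + δ) := by
      intro s hs
      by_contra h
      push_neg at h
      have hsS : s ∈ S := ⟨⟨hs.1, by linarith [hx₀Icc.2, hs.2]⟩, h⟩
      exact absurd (csInf_le hSbdd hsS) (not_le.mpr hs.2)
    -- integrability on [0, x₀]
    have hcont_x₀ : ContinuousOn (fun s => g (u₁ (s + δ))) (Set.uIcc 0 x₀) := by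
      apply hshift_cont.mono
      rw [uIcc_of_le hx₀Icc.1]
      exact Set.Icc_subset_Icc le_rfl hx₀Icc.2
    have int_b : IntervalIntegrable (fun s => k x₀ s * g (u₁ (s+δ))) volume 0 x₀ :=
      (hk_int x₀ x₀).mul_continuousOn hcont_x₀
    have int_a : IntervalIntegrable (fun s => k x₀ s * g (u₂ s)) volume 0 x₀ := by
      apply (hk_int x₀ x₀).mul_continuousOn
      apply (hg_cont.comp_continuousOn hu₂_cont).mono
      rw [uIcc_of_le hx₀Icc.1]
      exact Set.Icc_subset_Icc le_rfl (by linarith [hx₀Icc.2])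
    have hcmp : u₂ x₀ ≤ ∫ s in (0:ℝ)..x₀, k x₀ s * g (u₁ (s + δ)) := by
      rw [hu₂_sol x₀ ⟨hx₀Icc.1, by linarith [hx₀Icc.2]⟩]
      apply intervalIntegral.integral_mono_ae_restrict hx₀Icc.1 int_a int_b
      have hne : ∀ᵐ s ∂(volume.restrict (Set.Icc (0:ℝ) x₀)), s ≠ x₀ := by
        apply ae_restrict_of_ae
        rw [ae_iff]
        simp only [ne_eq, not_not, Set.setOf_eq_eq_singleton]
        exact Real.volume_singleton
      filter_upwards [ae_restrict_mem measurableSet_Icc, hne] with s hs hsne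
      have hs' : s ∈ Set.Ico (0:ℝ) x₀ := ⟨hs.1, lt_of_le_of_ne hs.2 hsne⟩
      have hpos : 0 ≤ u₁ (s + δ) :=
        (hu₁_pos (s+δ) ⟨by linarith [hs'.1], by linarith [hs'.2, hx₀Icc.2]⟩).le
      exact mul_le_mul_of_nonneg_left (hg_le _ _ (hbelow s hs') hpos) (hk_nonneg _ _)
    have := hsuper x₀ hx₀pos (by linarith [hx₀Icc.2])
    linarith
  -- limit δ → 0⁺
  have hlt : ∀ x ∈ Set.Ico (0:ℝ) L, u₂ x ≤ u₁ x := by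
    intro x hx
    have hkey : ∀ δ ∈ Set.Ioc (0:ℝ) (L - x), u₂ x ≤ u₁ (x + δ) := by
      intro δ hδ
      exact stepA δ hδ.1 (by linarith [hx.1, hδ.2]) x ⟨hx.1, by linarith [hδ.2]⟩
    have hnb : (𝓝[Set.Ioc (0:ℝ) (L-x)] 0).NeBot := by
      rw [← mem_closure_iff_nhdsWithin_neBot, closure_Ioc (by linarith [hx.2] : (0:ℝ) ≠ L - x)]
      exact ⟨le_rfl, by linarith [hx.2]⟩
    have h1 : Tendsto (fun δ : ℝ => x + δ) (𝓝[Set.Ioc 0 (L-x)] 0) (𝓝[Set.Icc 0 L] x) := by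
      apply tendsto_nhdsWithin_of_tendsto_nhds_of_eventually_within
      · have h0 : Tendsto (fun δ : ℝ => x + δ) (𝓝 0) (𝓝 x) := by
          simpa using (continuous_add_left x).tendsto 0
        exact h0.mono_left nhdsWithin_le_nhds
      · filter_upwards [self_mem_nhdsWithin] with δ hδ
        exact ⟨by linarith [hx.1, hδ.1.le], by linarith [hδ.2]⟩
    have htend : Tendsto (fun δ => u₁ (x + δ)) (𝓝[Set.Ioc 0 (L-x)] (0:ℝ)) (𝓝 (u₁ x)) :=
      ((hu₁_cont x ⟨hx.1, hx.2.le⟩).tendsto).comp h1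
    exact ge_of_tendsto htend (eventually_nhdsWithin_of_forall hkey)
  intro x hx
  rcases hx.2.eq_or_lt with h | h
  · subst h
    have hnb : (𝓝[Set.Ico (0:ℝ) x] x).NeBot := by
      rw [← mem_closure_iff_nhdsWithin_neBot, closure_Ico (hL.ne : (0:ℝ) ≠ x)]
      exact ⟨hL.le, le_rfl⟩
    have t1 : Tendsto u₁ (𝓝[Set.Ico 0 x] x) (𝓝 (u₁ x)) :=
      ((hu₁_cont x ⟨hL.le, le_rfl⟩).tendsto).mono_left (nhdsWithin_mono x Set.Ico_subset_Icc_self)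
    have t2 : Tendsto u₂ (𝓝[Set.Ico 0 x] x) (𝓝 (u₂ x)) :=
      ((hu₂_cont x ⟨hL.le, le_rfl⟩).tendsto).mono_left (nhdsWithin_mono x Set.Ico_subset_Icc_self)
    exact le_of_tendsto_of_tendsto t2 t1 (eventually_nhdsWithin_of_forall hlt)
  · exact hlt x ⟨hx.1, h⟩

theorem uniqueness_of_positive_solution
    (k : ℝ → ℝ → ℝ) (g u₁ u₂ : ℝ → ℝ) (L : ℝ)
    (hk_nonneg : ∀ x s, 0 ≤ k x s)
    (hk_zero : ∀ x s, x < s → k x s = 0)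
    (hk_bdd : ∀ r > (0:ℝ), ∃ C, ∀ x ∈ Set.Icc (-r) r, ∀ s ∈ Set.Icc (-r) r, k x s ≤ C)
    (hk_int : ∀ x r, IntervalIntegrable (fun s => k x s) volume 0 r)
    (hK_mono : StrictMonoOn (fun x => ∫ s in (0:ℝ)..x, k x s) (Set.Ici 0))
    (hK_cont : Continuous (fun x => ∫ s in (0:ℝ)..x, k x s))
    (hk_trans : ∀ x s l : ℝ, 0 ≤ l → k x s ≤ k (x + l) (s + l))
    (hg_cont : Continuous g)
    (hg_mono : StrictMonoOn g (Set.Ici 0))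
    (hg_zero : ∀ x ≤ (0:ℝ), g x = 0)
    (hL : 0 < L)
    (hu₁_cont : ContinuousOn u₁ (Set.Icc 0 L))
    (hu₁_pos : ∀ x ∈ Set.Ioc (0:ℝ) L, 0 < u₁ x)
    (hu₁_sol : ∀ x ∈ Set.Icc (0:ℝ) L, u₁ x = ∫ s in (0:ℝ)..x, k x s * g (u₁ s))
    (hu₂_cont : ContinuousOn u₂ (Set.Icc 0 L))
    (hu₂_pos : ∀ x ∈ Set.Ioc (0:ℝ) L, 0 < u₂ x)
    (hu₂_sol : ∀ x ∈ Set.Icc (0:ℝ) L, u₂ x = ∫ s in (0:ℝ)..x, k x s * g (u₂ s)) :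
    ∀ x ∈ Set.Icc (0:ℝ) L, u₁ x = u₂ x := by
  intro x hx
  exact le_antisymm
    (uniq_one_sided k g u₂ u₁ L hk_nonneg hk_int hK_mono hk_trans hg_cont hg_mono hg_zero hL
      hu₂_cont hu₂_pos hu₂_sol hu₁_cont hu₁_sol x hx)
    (uniq_one_sided k g u₁ u₂ L hk_nonneg hk_int hK_mono hk_trans hg_cont hg_mono hg_zero hL
      hu₁_cont hu₁_pos hu₁_sol hu₂_cont hu₂_sol x hx)
end

section
/- Let α ∈ (−1,0) and g(x) = (x³ − 3x² + 3x)/B(α+1, −α) for x ≥ 0 (and g = 0 for x < 0). Then g is continuous and strictly increasing on [0,∞), and both constant functions u₁ ≡ 1 and u₂ ≡ 2 are solutions of u(x) = ∫₀ˣ (x−s)^α s^{−α−1} g(u(s)) ds; in particular this equation has at least two distinct positive solutions. -/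
open MeasureTheory Set Filter Real

noncomputable def Beta (p q : ℝ) : ℝ := ∫ t in (0:ℝ)..1, t ^ (p - 1) * (1 - t) ^ (q - 1)

lemma beta_integrable {a b : ℝ} (ha : -1 < a) (hb : -1 < b) :
    IntervalIntegrable (fun t : ℝ => t ^ a * (1 - t) ^ b) volume 0 1 := by
  have h1 : IntervalIntegrable (fun t : ℝ => t ^ a * (1 - t) ^ b) volume 0 (1/2) := by
    apply (intervalIntegral.intervalIntegrable_rpow' ha).mul_continuousOn
    apply ContinuousOn.rpow_const (by fun_prop)
    intro x hx
    rw [Set.uIcc_of_le (by norm_num)] at hx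
    left
    have := hx.2
    intro h; linarith [sub_eq_zero.mp h]
  have h2 : IntervalIntegrable (fun t : ℝ => t ^ a * (1 - t) ^ b) volume (1/2) 1 := by
    have hint : IntervalIntegrable (fun t : ℝ => (1 - t) ^ b) volume (1/2) 1 := by
      have := ((intervalIntegral.intervalIntegrable_rpow' hb (a := 0) (b := 1/2)).comp_sub_left 1).symm
      norm_num at this
      exact this
    apply hint.continuousOn_mul
    apply ContinuousOn.rpow_const (by fun_prop)
    intro x hx
    rw [Set.uIcc_of_le (by norm_num)] at hx
    left
    have := hx.1
    intro h; linarith [h]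
  exact h1.trans h2

lemma beta_pos {a b : ℝ} (ha : a ∈ Set.Ioo (-1:ℝ) 0) (hb : b ∈ Set.Ioo (-1:ℝ) 0) :
    0 < ∫ t in (0:ℝ)..1, t ^ a * (1 - t) ^ b := by
  apply intervalIntegral.intervalIntegral_pos_of_pos_on (beta_integrable ha.1 hb.1)
  · intro x hx
    exact mul_pos (Real.rpow_pos_of_pos hx.1 a) (Real.rpow_pos_of_pos (by linarith [hx.2]) b)
  · norm_num

theorem equation_with_two_constant_solutions
    (α : ℝ) (hα : α ∈ Set.Ioo (-1:ℝ) 0) (g : ℝ → ℝ)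
    (hg : g = fun x => if 0 ≤ x then (x ^ 3 - 3 * x ^ 2 + 3 * x) / Beta (α + 1) (-α) else 0) :
    Continuous g ∧
    StrictMonoOn g (Set.Ici 0) ∧
    (∀ x : ℝ, 0 < x → (1:ℝ) = ∫ s in (0:ℝ)..x, (x - s) ^ α * s ^ (-α - 1) * g 1) ∧
    (∀ x : ℝ, 0 < x → (2:ℝ) = ∫ s in (0:ℝ)..x, (x - s) ^ α * s ^ (-α - 1) * g 2) := by
  have hα1 : α ∈ Set.Ioo (-1:ℝ) 0 := hα
  have hexp : (-α - 1 : ℝ) ∈ Set.Ioo (-1:ℝ) 0 := ⟨by linarith [hα.2], by linarith [hα.1]⟩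
  have hBeq : Beta (α + 1) (-α) = ∫ t in (0:ℝ)..1, t ^ α * (1 - t) ^ (-α - 1) := by
    unfold Beta; congr 1; ring_nf
  have hB : 0 < Beta (α + 1) (-α) := by
    rw [hBeq]; exact beta_pos hα hexp
  have hBne : Beta (α + 1) (-α) ≠ 0 := ne_of_gt hB
  -- the key integral computation
  have key : ∀ x : ℝ, 0 < x →
      (∫ s in (0:ℝ)..x, (x - s) ^ α * s ^ (-α - 1)) = Beta (α + 1) (-α) := by
    intro x hx
    have hsub := intervalIntegral.smul_integral_comp_mul_left
      (fun s => (x - s) ^ α * s ^ (-α - 1)) x (a := 0) (b := 1)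
    rw [mul_zero, mul_one] at hsub
    rw [← hsub]
    have hcongr : (∫ t in (0:ℝ)..1, (x - x * t) ^ α * (x * t) ^ (-α - 1))
        = ∫ t in (0:ℝ)..1, x⁻¹ * ((1 - t) ^ α * t ^ (-α - 1)) := by
      apply intervalIntegral.integral_congr
      intro t ht
      rw [Set.uIcc_of_le (by norm_num)] at ht
      show (x - x * t) ^ α * (x * t) ^ (-α - 1) = x⁻¹ * ((1 - t) ^ α * t ^ (-α - 1))
      have ht0 : 0 ≤ t := ht.1
      have ht1 : 0 ≤ 1 - t := by linarith [ht.2]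
      have e1 : x - x * t = x * (1 - t) := by ring
      rw [e1, Real.mul_rpow hx.le ht1, Real.mul_rpow hx.le ht0]
      have : x ^ α * (1 - t) ^ α * (x ^ (-α - 1) * t ^ (-α - 1))
          = (x ^ α * x ^ (-α - 1)) * ((1 - t) ^ α * t ^ (-α - 1)) := by ring
      rw [this, ← Real.rpow_add hx, show α + (-α - 1) = -1 by ring, Real.rpow_neg_one]
    rw [hcongr, intervalIntegral.integral_const_mul, smul_eq_mul,
      ← mul_assoc, mul_inv_cancel₀ (ne_of_gt hx), one_mul]
    -- now symmetry of the Beta integrand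
    rw [hBeq]
    have := intervalIntegral.integral_comp_sub_left
      (fun t : ℝ => t ^ α * (1 - t) ^ (-α - 1)) 1 (a := 0) (b := 1)
    simp only [sub_zero, sub_self, sub_sub_cancel] at this
    rw [← this]
  -- values of g
  have hg1 : g 1 = 1 / Beta (α + 1) (-α) := by rw [hg]; norm_num
  have hg2 : g 2 = 2 / Beta (α + 1) (-α) := by rw [hg]; norm_num
  refine ⟨?_, ?_, ?_, ?_⟩
  · -- continuity
    have : g = fun x => ((max x 0) ^ 3 - 3 * (max x 0) ^ 2 + 3 * max x 0) / Beta (α + 1) (-α) := by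
      rw [hg]; funext x
      by_cases h : 0 ≤ x
      · simp [h, max_eq_left h]
      · simp [h, max_eq_right (le_of_not_ge h)]
    rw [this]; fun_prop
  · -- strict mono
    intro a ha b hb hab
    rw [hg]
    simp only [mem_Ici] at ha hb
    simp only [ha, hb, if_true]
    rw [div_lt_div_iff_of_pos_right hB]
    have h3 : (a - 1) ^ 3 < (b - 1) ^ 3 :=
      (Odd.strictMono_pow (R := ℝ) (n := 3) ⟨1, by norm_num⟩) (show a - 1 < b - 1 by linarith)
    nlinarith [h3]
  · intro x hx
    rw [intervalIntegral.integral_mul_const, key x hx, hg1]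
    field_simp
  · intro x hx
    rw [intervalIntegral.integral_mul_const, key x hx, hg2]
    field_simp
end
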